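/- For every p ∈ [2, ∞), every n ∈ ℕ, every k ∈ {0, 1, …, n}, and every h : {−1,1}^n → ℝ, the k-th Rademacher projection satisfies ‖Rad_k h‖_p ≤ p^{k/2} ‖h‖_p. -/

import Mathlib

open Finset

/-- The normalized `L_p` norm of a function on the discrete hypercube `{-1,1}^n`
(coordinates encoded by `Bool`). -/
noncomputable def pnorm {n : ℕ} (p : ℝ) (h : (Fin n → Bool) → ℝ) : ℝ :=
  ((∑ ε : Fin n → Bool, |h ε| ^ p) / 2 ^ n) ^ (1 / p)

/-- The Walsh function `W_A(ε) = Π_{j ∈ A} ε_j`. -/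
def walsh {n : ℕ} (A : Finset (Fin n)) (ε : Fin n → Bool) : ℝ :=
  ∏ j ∈ A, (if ε j then (1 : ℝ) else -1)

/-- The Fourier–Walsh coefficient `ĥ(A) = 2^{-n} Σ_ε h(ε) W_A(ε)`. -/
noncomputable def fourierCoef {n : ℕ} (h : (Fin n → Bool) → ℝ) (A : Finset (Fin n)) : ℝ :=
  (∑ ε : Fin n → Bool, h ε * walsh A ε) / 2 ^ n

/-- `Δ_S^α h = Σ_{A ∩ S ≠ ∅} |A ∩ S|^α ĥ(A) W_A`. -/
noncomputable def deltaPow {n : ℕ} (S : Finset (Fin n)) (α : ℝ) (h : (Fin n → Bool) → ℝ) :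
    (Fin n → Bool) → ℝ :=
  fun ε => ∑ A : Finset (Fin n),
    if (A ∩ S).Nonempty then ((A ∩ S).card : ℝ) ^ α * fourierCoef h A * walsh A ε else 0

/-- `E_S h`: averaging of `h` over the coordinates in `S`. -/
noncomputable def condAvg {n : ℕ} (S : Finset (Fin n)) (h : (Fin n → Bool) → ℝ) :
    (Fin n → Bool) → ℝ :=
  fun ε => (∑ δ : Fin n → Bool, h (fun j => if j ∈ S then δ j else ε j)) / 2 ^ n

/-- The `k`-th Rademacher projection `Rad_k h = Σ_{|A| = k} ĥ(A) W_A`. -/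
noncomputable def radProj {n : ℕ} (k : ℕ) (h : (Fin n → Bool) → ℝ) :
    (Fin n → Bool) → ℝ :=
  fun ε => ∑ A ∈ powersetCard k (univ : Finset (Fin n)), fourierCoef h A * walsh A ε

section BonamiProof
open Real


private lemma lemA : ∀ m : ℕ, ∀ q : ℝ, 0 ≤ q → q ≤ (m:ℝ) → ∀ β : ℝ, (2*q - 1)/4 ≤ β → 0 ≤ β →
    ∀ u : ℝ, 0 ≤ u → u ≤ 1 → (1+u)^q + (1-u)^q ≤ 2*(1+β*u^2)^q := by
  intro m
  induction m using Nat.strong_induction_on with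
  | _ m IH =>
    intro q hq0 hqm β hβ hβ0
    have hpos : ∀ u : ℝ, 0 ≤ u → u ≤ 1 → (0:ℝ) < 1+β*u^2 := by intro u h0 h1; nlinarith
    have hbase : ∀ r : ℝ, 0 ≤ r → ∀ u : ℝ, 0 ≤ u → u ≤ 1 → 1 ≤ (1+β*u^2)^r := by
      intro r hr u hu0 hu1
      calc (1:ℝ) = 1 ^ r := (Real.one_rpow r).symm
      _ ≤ (1+β*u^2)^r := Real.rpow_le_rpow (by norm_num) (by nlinarith) hr
    by_cases hq1 : q ≤ 1
    · intro u hu0 hu1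
      have h1 : (1+u)^q ≤ 1 + q*u :=
        rpow_one_add_le_one_add_mul_self (by linarith) hq0 hq1
      have h2 : (1-u)^q ≤ 1 + q*(-u) := by
        have := rpow_one_add_le_one_add_mul_self (s := -u) (by linarith) hq0 hq1
        simpa [sub_eq_add_neg] using this
      have := hbase q hq0 u hu0 hu1
      nlinarith
    push_neg at hq1
    -- key derivative claim
    have hC2 : ∀ u, 0 ≤ u → u ≤ 1 →
        (1+u)^(q-1) - (1-u)^(q-1) ≤ 4*β*u*(1+β*u^2)^(q-1) := by
      by_cases hq2 : q ≤ 2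
      · intro u hu0 hu1
        have hs0 : (0:ℝ) ≤ q - 1 := by linarith
        have hs1 : q - 1 ≤ 1 := by linarith
        have h1 : (1+u)^(q-1) ≤ 1 + (q-1)*u :=
          rpow_one_add_le_one_add_mul_self (by linarith) hs0 hs1
        have h2 : 1 - u ≤ (1-u)^(q-1) := by
          rcases eq_or_lt_of_le hu1 with h | h
          · rw [h]; simp [Real.zero_rpow (show q-1 ≠ 0 by linarith)]
          · have hx : (0:ℝ) < 1 - u := by linarith
            have := Real.rpow_le_rpow_of_exponent_ge hx (by linarith) hs1
            simpa using this
        have h3 := hbase (q-1) hs0 u hu0 hu1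
        have h4 : q*u ≤ 4*β*u := by nlinarith
        nlinarith [mul_nonneg (by positivity : (0:ℝ) ≤ 4*β*u)
          (by linarith : (0:ℝ) ≤ (1+β*u^2)^(q-1) - 1)]
      · push_neg at hq2
        have hm3 : 3 ≤ m := by
          have : (2:ℝ) < (m:ℝ) := lt_of_lt_of_le hq2 hqm
          have : 2 < m := by exact_mod_cast this
          omega
        have hIH2 : ∀ u, 0 ≤ u → u ≤ 1 →
            (1+u)^(q-2) + (1-u)^(q-2) ≤ 2*(1+β*u^2)^(q-2) := by
          have hcast : ((m-2 : ℕ) : ℝ) = (m:ℝ) - 2 := by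
            push_cast [Nat.cast_sub (by omega : 2 ≤ m)]; ring
          exact fun u hu0 hu1 => IH (m-2) (by omega) (q-2) (by linarith)
            (by rw [hcast]; linarith) β (by linarith) hβ0 u hu0 hu1
        set G : ℝ → ℝ := fun u => 4*β*u*(1+β*u^2)^(q-1) - (1+u)^(q-1) + (1-u)^(q-1) with hG
        have hGd : ∀ u ∈ Set.Ioo (0:ℝ) 1, HasDerivAt G
            ((4*β)*(1+β*u^2)^(q-1) + (4*β*u)*((β*(2*u))*(q-1)*(1+β*u^2)^(q-1-1))
              - 1*(q-1)*(1+u)^(q-1-1) + (-1)*(q-1)*(1-u)^(q-1-1)) u := by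
          intro u hu
          obtain ⟨hu0, hu1⟩ := hu
          have d1 : HasDerivAt (fun x : ℝ => 1+x) 1 u := (hasDerivAt_id u).const_add 1
          have d2 : HasDerivAt (fun x : ℝ => 1-x) (-1) u := (hasDerivAt_id u).const_sub 1
          have d3 : HasDerivAt (fun x : ℝ => 1+β*x^2) (β*(2*u)) u := by
            have := ((hasDerivAt_pow 2 u).const_mul β).const_add 1
            simpa using this
          have e1 : HasDerivAt (fun x : ℝ => (1+x)^(q-1)) (1*(q-1)*(1+u)^(q-1-1)) u :=
            d1.rpow_const (Or.inl (by positivity))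
          have e2 : HasDerivAt (fun x : ℝ => (1-x)^(q-1)) ((-1)*(q-1)*(1-u)^(q-1-1)) u :=
            d2.rpow_const (Or.inl (by intro h; nlinarith))
          have e3 : HasDerivAt (fun x : ℝ => (1+β*x^2)^(q-1))
              ((β*(2*u))*(q-1)*(1+β*u^2)^(q-1-1)) u :=
            d3.rpow_const (Or.inl (by nlinarith))
          have e4 : HasDerivAt (fun x : ℝ => 4*β*x) (4*β) u := by
            simpa using (hasDerivAt_id u).const_mul (4*β)
          have := ((e4.mul e3).sub e1).add e2
          exact this.congr_deriv (by ring)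
        have hGc : Continuous G := by
          have c1 : Continuous (fun u : ℝ => (1+u)^(q-1)) :=
            (continuous_const.add continuous_id').rpow_const (fun x => Or.inr (by linarith))
          have c2 : Continuous (fun u : ℝ => (1-u)^(q-1)) :=
            (continuous_const.sub continuous_id').rpow_const (fun x => Or.inr (by linarith))
          have c3 : Continuous (fun u : ℝ => (1+β*u^2)^(q-1)) :=
            (continuous_const.add (continuous_const.mul (continuous_pow 2))).rpow_const
              (fun x => Or.inr (by linarith))
          exact (((continuous_const.mul continuous_id').mul c3).sub c1).add c2
        have hGmono : MonotoneOn G (Set.Icc (0:ℝ) 1) := by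
          apply monotoneOn_of_deriv_nonneg (convex_Icc 0 1) hGc.continuousOn
          · rw [interior_Icc]
            exact fun u hu => ((hGd u hu).differentiableAt).differentiableWithinAt
          · rw [interior_Icc]
            intro u hu
            rw [(hGd u hu).deriv]
            obtain ⟨hu0, hu1⟩ := hu
            have key := hIH2 u hu0.le hu1.le
            have hP : (1:ℝ) ≤ (1+β*u^2)^(q-2) := hbase (q-2) (by linarith) u hu0.le hu1.le
            have hsplit : (1+β*u^2)^(q-1) = (1+β*u^2)^(q-2) * (1+β*u^2) := by
              have h := Real.rpow_add (hpos u hu0.le hu1.le) (q-2) 1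
              rw [Real.rpow_one] at h
              rw [show q-1 = q-2+1 by ring, h]
            have h21 : q-1-1 = q-2 := by ring
            rw [h21, hsplit]
            set P := (1+β*u^2)^(q-2) with hPdef
            have hP0 : (0:ℝ) ≤ P := le_trans zero_le_one hP
            have hq1' : (0:ℝ) ≤ q - 1 := by linarith
            have e1 : (q-1)*((1+u)^(q-2)+(1-u)^(q-2)) ≤ (q-1)*(2*P) :=
              mul_le_mul_of_nonneg_left key hq1'
            have e2 : (0:ℝ) ≤ 4*β*u*(β*(2*u)*(q-1)*P) := by positivity
            have e3 : 4*β*P ≤ 4*β*(P*(1+β*u^2)) := by nlinarith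
            have e4 : 2*(q-1)*P ≤ 4*β*P := by nlinarith
            have h5 : (0:ℝ) ≤ (1-u)^(q-2) := Real.rpow_nonneg (by linarith) _
            have h6 : (0:ℝ) ≤ (1+u)^(q-2) := Real.rpow_nonneg (by linarith) _
            nlinarith
        intro u hu0 hu1
        have h0 : G 0 = 0 := by norm_num [hG]
        have := hGmono (Set.mem_Icc.mpr ⟨le_refl 0, zero_le_one⟩) (Set.mem_Icc.mpr ⟨hu0, hu1⟩) hu0
        rw [h0] at this
        simp only [hG] at this
        linarith
    -- main monotonicity
    set D : ℝ → ℝ := fun u => 2*(1+β*u^2)^q - (1+u)^q - (1-u)^q with hD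
    have hDd : ∀ u ∈ Set.Ioo (0:ℝ) 1, HasDerivAt D
        (2*((β*(2*u))*q*(1+β*u^2)^(q-1)) - 1*q*(1+u)^(q-1) + q*(1-u)^(q-1)) u := by
      intro u hu
      obtain ⟨hu0, hu1⟩ := hu
      have d1 : HasDerivAt (fun x : ℝ => 1+x) 1 u := (hasDerivAt_id u).const_add 1
      have d2 : HasDerivAt (fun x : ℝ => 1-x) (-1) u := (hasDerivAt_id u).const_sub 1
      have d3 : HasDerivAt (fun x : ℝ => 1+β*x^2) (β*(2*u)) u := by
        have := ((hasDerivAt_pow 2 u).const_mul β).const_add 1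
        simpa using this
      have e1 : HasDerivAt (fun x : ℝ => (1+x)^q) (1*q*(1+u)^(q-1)) u :=
        d1.rpow_const (Or.inl (by positivity))
      have e2 : HasDerivAt (fun x : ℝ => (1-x)^q) ((-1)*q*(1-u)^(q-1)) u :=
        d2.rpow_const (Or.inl (by intro h; nlinarith))
      have e3 : HasDerivAt (fun x : ℝ => (1+β*x^2)^q) ((β*(2*u))*q*(1+β*u^2)^(q-1)) u :=
        d3.rpow_const (Or.inl (by nlinarith))
      have := ((e3.const_mul 2).sub e1).sub e2
      exact this.congr_deriv (by ring)
    have hDc : Continuous D := by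
      have c1 : Continuous (fun u : ℝ => (1+u)^q) :=
        (continuous_const.add continuous_id').rpow_const (fun x => Or.inr (by linarith))
      have c2 : Continuous (fun u : ℝ => (1-u)^q) :=
        (continuous_const.sub continuous_id').rpow_const (fun x => Or.inr (by linarith))
      have c3 : Continuous (fun u : ℝ => (1+β*u^2)^q) :=
        (continuous_const.add (continuous_const.mul (continuous_pow 2))).rpow_const
          (fun x => Or.inr (by linarith))
      exact ((continuous_const.mul c3).sub c1).sub c2
    have hDmono : MonotoneOn D (Set.Icc (0:ℝ) 1) := by
      apply monotoneOn_of_deriv_nonneg (convex_Icc 0 1) hDc.continuousOn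
      · rw [interior_Icc]
        exact fun u hu => ((hDd u hu).differentiableAt).differentiableWithinAt
      · rw [interior_Icc]
        intro u hu
        rw [(hDd u hu).deriv]
        obtain ⟨hu0, hu1⟩ := hu
        have key := hC2 u hu0.le hu1.le
        nlinarith
    intro u hu0 hu1
    have h0 : D 0 = 0 := by norm_num [hD]
    have := hDmono (Set.mem_Icc.mpr ⟨le_refl 0, zero_le_one⟩) (Set.mem_Icc.mpr ⟨hu0, hu1⟩) hu0
    rw [h0] at this
    simp only [hD] at this
    linarith

private lemma twoPoint_t (p t : ℝ) (hp : 2 ≤ p) (ht0 : 0 ≤ t) (ht1 : t ≤ 1) :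
    (1+t)^p + (1-t)^p ≤ 2*(1 + p*t^2)^(p/2) := by
  have hs : (0:ℝ) < 1 + t^2 := by positivity
  set q : ℝ := p/2 with hq
  set β : ℝ := (p-1)/4 with hβ
  set u : ℝ := 2*t/(1+t^2) with hu
  have hu0 : 0 ≤ u := by positivity
  have hu1 : u ≤ 1 := by
    rw [hu, div_le_one hs]; nlinarith
  have hβ0 : (0:ℝ) ≤ β := by rw [hβ]; linarith
  have hβu : (0:ℝ) ≤ β*u^2 := by positivity
  have key := lemA ⌈q⌉₊ q (by rw [hq]; linarith) (Nat.le_ceil q) β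
    (by rw [hβ, hq]; linarith) hβ0 u hu0 hu1
  have hsq : (0:ℝ) ≤ (1+t^2) := hs.le
  -- multiply key by (1+t^2)^q
  have hfac : (0:ℝ) ≤ (1+t^2)^q := Real.rpow_nonneg hsq q
  have e1 : (1+t^2)^q * (1+u)^q = (1+t)^p := by
    rw [← Real.mul_rpow hsq (by linarith)]
    have : (1+t^2) * (1+u) = (1+t)^(2:ℕ) := by
      rw [hu]; field_simp; ring
    rw [this, ← Real.rpow_natCast (1+t) 2, ← Real.rpow_mul (by linarith)]
    congr 1
    rw [hq]; ring
  have e2 : (1+t^2)^q * (1-u)^q = (1-t)^p := by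
    rw [← Real.mul_rpow hsq (by nlinarith)]
    have : (1+t^2) * (1-u) = (1-t)^(2:ℕ) := by
      rw [hu]; field_simp; ring
    rw [this, ← Real.rpow_natCast (1-t) 2, ← Real.rpow_mul (by linarith)]
    congr 1
    rw [hq]; ring
  have e3 : (1+t^2)^q * (1+β*u^2)^q ≤ (1+p*t^2)^q := by
    rw [← Real.mul_rpow hsq (by linarith)]
    apply Real.rpow_le_rpow (by nlinarith) ?_ (by rw [hq]; linarith)
    have hu2 : u^2 = 4*t^2/(1+t^2)^2 := by rw [hu]; field_simp; ring
    rw [hu2, hβ]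
    rw [← sub_nonneg]
    have expand : 1+p*t^2 - (1+t^2)*(1+(p-1)/4*(4*t^2/(1+t^2)^2)) = (p-1)*t^4/(1+t^2) := by
      field_simp
      ring
    rw [expand]
    exact div_nonneg (mul_nonneg (by linarith) (by positivity)) hs.le
  calc (1+t)^p + (1-t)^p = (1+t^2)^q * ((1+u)^q + (1-u)^q) := by
        rw [mul_add, e1, e2]
  _ ≤ (1+t^2)^q * (2*(1+β*u^2)^q) := by
        apply mul_le_mul_of_nonneg_left key hfac
  _ = 2 * ((1+t^2)^q * (1+β*u^2)^q) := by ring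
  _ ≤ 2*(1+p*t^2)^q := by linarith [e3]

private lemma twoPoint_core (p a b : ℝ) (hp : 2 ≤ p) (ha : 0 ≤ b) (hab : b ≤ a) :
    (|a+b|^p + |a-b|^p)/2 ≤ (a^2 + p*b^2)^(p/2) := by
  have hp0 : p ≠ 0 := by linarith
  rcases eq_or_lt_of_le (le_trans ha hab) with h0 | h0
  · -- a = 0, so b = 0
    have hb0 : b = 0 := le_antisymm (by linarith) ha
    rw [← h0, hb0]
    norm_num [Real.zero_rpow hp0, Real.zero_rpow (show p/2 ≠ 0 by positivity)]
  · have ht0 : 0 ≤ b/a := by positivity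
    have ht1 : b/a ≤ 1 := by rw [div_le_one h0]; exact hab
    have key := twoPoint_t p (b/a) hp ht0 ht1
    have ha2 : (0:ℝ) ≤ a^2 := sq_nonneg a
    have hfac : (0:ℝ) ≤ (a^2)^(p/2) := Real.rpow_nonneg ha2 _
    have e1 : (a^2)^(p/2) * (1+b/a)^p = |a+b|^p := by
      have h2 : (a^2)^(p/2) = a^p := by
        rw [← Real.rpow_natCast a 2, ← Real.rpow_mul h0.le]
        congr 1
        ring
      rw [h2, ← Real.mul_rpow h0.le (by positivity)]
      rw [abs_of_nonneg (by linarith)]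
      congr 1
      field_simp
    have e2 : (a^2)^(p/2) * (1-b/a)^p = |a-b|^p := by
      have h2 : (a^2)^(p/2) = a^p := by
        rw [← Real.rpow_natCast a 2, ← Real.rpow_mul h0.le]
        congr 1
        ring
      have hba : 0 ≤ 1 - b/a := by linarith
      rw [h2, ← Real.mul_rpow h0.le hba]
      rw [abs_of_nonneg (by linarith)]
      congr 1
      field_simp
    have e3 : (a^2)^(p/2) * (1+p*(b/a)^2)^(p/2) = (a^2+p*b^2)^(p/2) := by
      rw [← Real.mul_rpow ha2 (by positivity)]
      congr 1
      field_simp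
    rw [div_le_iff₀ (by norm_num : (0:ℝ) < 2)]
    calc |a+b|^p + |a-b|^p = (a^2)^(p/2) * ((1+b/a)^p + (1-b/a)^p) := by
          rw [mul_add, e1, e2]
    _ ≤ (a^2)^(p/2) * (2*(1+p*(b/a)^2)^(p/2)) := mul_le_mul_of_nonneg_left key hfac
    _ = (a^2+p*b^2)^(p/2) * 2 := by rw [← e3]; ring

private lemma twoPoint_nn (p a b : ℝ) (hp : 2 ≤ p) (ha : 0 ≤ a) (hb : 0 ≤ b) :
    (|a+b|^p + |a-b|^p)/2 ≤ (a^2 + p*b^2)^(p/2) := by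
  rcases le_total b a with h | h
  · exact twoPoint_core p a b hp hb h
  · have key := twoPoint_core p b a hp ha h
    rw [add_comm b a, abs_sub_comm b a] at key
    refine le_trans key (Real.rpow_le_rpow (by positivity) ?_ (by linarith))
    nlinarith [mul_le_mul_of_nonneg_left (mul_self_le_mul_self ha h)
      (show (0:ℝ) ≤ p - 1 by linarith)]

private lemma twoPoint (p a b : ℝ) (hp : 2 ≤ p) :
    (|a+b|^p + |a-b|^p)/2 ≤ (a^2 + p*b^2)^(p/2) := by
  rcases le_total 0 a with ha | ha <;> rcases le_total 0 b with hb | hb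
  · exact twoPoint_nn p a b hp ha hb
  · have := twoPoint_nn p a (-b) hp ha (by linarith)
    rw [show a + -b = a - b by ring, show a - -b = a + b by ring, add_comm (|a-b|^p)] at this
    simpa using this
  · have := twoPoint_nn p (-a) b hp (by linarith) hb
    rw [show -a + b = -(a - b) by ring, show -a - b = -(a + b) by ring, abs_neg, abs_neg,
      add_comm (|a-b|^p)] at this
    simpa using this
  · have := twoPoint_nn p (-a) (-b) hp (by linarith) (by linarith)
    rw [show -a + -b = -(a + b) by ring, show -a - -b = -(a - b) by ring, abs_neg, abs_neg] at this
    simpa using this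

-- # basics

private lemma card_cube (n : ℕ) : (Fintype.card (Fin n → Bool) : ℝ) = 2^n := by
  rw [Fintype.card_fun]
  norm_num

private lemma sum_bool_cons {n : ℕ} (F : (Fin (n+1) → Bool) → ℝ) :
    ∑ ε : Fin (n+1) → Bool, F ε
      = (∑ ε : Fin n → Bool, F (Fin.cons true ε)) + (∑ ε : Fin n → Bool, F (Fin.cons false ε)) := by
  rw [← Equiv.sum_comp (Fin.consEquiv (fun _ : Fin (n+1) => Bool)) F, Fintype.sum_prod_type,
    Fintype.sum_bool]
  rfl

private lemma walsh_sum_zero {n : ℕ} {C : Finset (Fin n)} (hC : C.Nonempty) :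
    ∑ ε : Fin n → Bool, walsh C ε = 0 := by
  obtain ⟨j, hj⟩ := hC
  apply Finset.sum_ninvolution (fun ε => Function.update ε j (!ε j))
  · intro ε
    have h1 : walsh C ε
        = (if ε j then (1:ℝ) else -1) * ∏ i ∈ C.erase j, (if ε i then (1:ℝ) else -1) :=
      (Finset.mul_prod_erase C _ hj).symm
    have h2 : walsh C (Function.update ε j (!ε j))
        = (if !ε j then (1:ℝ) else -1) * ∏ i ∈ C.erase j, (if ε i then (1:ℝ) else -1) := by
      rw [walsh, ← Finset.mul_prod_erase C (fun i => if Function.update ε j (!ε j) i then (1:ℝ) else -1) hj]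
      simp only [Function.update_self]
      congr 1
      apply Finset.prod_congr rfl
      intro i hi
      rw [Function.update_of_ne (Finset.ne_of_mem_erase hi)]
    rw [h1, h2]
    cases hb : ε j <;> simp <;> ring
  · intro ε _ h
    have := congrFun h j
    simp at this
  · intro ε; exact Finset.mem_univ _
  · intro ε
    funext i
    by_cases h : i = j
    · subst h; simp
    · simp [Function.update_of_ne h]

private lemma walsh_mul {n : ℕ} (A B : Finset (Fin n)) (ε : Fin n → Bool) :
    walsh A ε * walsh B ε = walsh (symmDiff A B) ε := by
  classical
  have hsq : ∀ i : Fin n, ((if ε i then (1:ℝ) else -1) * (if ε i then (1:ℝ) else -1)) = 1 := by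
    intro i; cases ε i <;> norm_num
  have hA : walsh A ε = walsh (A \ B) ε * walsh (A ∩ B) ε := by
    rw [walsh, walsh, walsh, ← Finset.prod_union (Finset.disjoint_sdiff_inter A B),
      Finset.sdiff_union_inter]
  have hB : walsh B ε = walsh (B \ A) ε * walsh (A ∩ B) ε := by
    rw [Finset.inter_comm A B, walsh, walsh, walsh,
      ← Finset.prod_union (Finset.disjoint_sdiff_inter B A), Finset.sdiff_union_inter]
  have hSD : walsh (symmDiff A B) ε = walsh (A \ B) ε * walsh (B \ A) ε := by
    rw [symmDiff_def, Finset.sup_eq_union, walsh, walsh, walsh,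
      ← Finset.prod_union disjoint_sdiff_sdiff]
  have hI : walsh (A ∩ B) ε * walsh (A ∩ B) ε = 1 := by
    rw [walsh, ← Finset.prod_mul_distrib]
    exact Finset.prod_eq_one (fun i _ => hsq i)
  calc walsh A ε * walsh B ε
      = (walsh (A \ B) ε * walsh (B \ A) ε) * (walsh (A ∩ B) ε * walsh (A ∩ B) ε) := by
        rw [hA, hB]; ring
  _ = walsh (symmDiff A B) ε := by rw [hI, hSD, mul_one]

private lemma walsh_orth {n : ℕ} (A B : Finset (Fin n)) :
    ∑ ε : Fin n → Bool, walsh A ε * walsh B ε = if A = B then (2^n : ℝ) else 0 := by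
  classical
  simp_rw [walsh_mul]
  by_cases h : A = B
  · subst h
    rw [if_pos rfl]
    have : symmDiff A A = ∅ := symmDiff_self A
    simp only [this]
    rw [show walsh (∅ : Finset (Fin n)) = fun _ => (1:ℝ) from funext (fun ε => Finset.prod_empty)]
    rw [Finset.sum_const, Finset.card_univ]
    rw [nsmul_eq_mul, card_cube n, mul_one]
  · rw [if_neg h]
    apply walsh_sum_zero
    rw [Finset.nonempty_iff_ne_empty]
    intro hc
    exact h (symmDiff_eq_bot.mp hc)

private noncomputable def eF {n : ℕ} (f : (Fin (n+1) → Bool) → ℝ) : (Fin n → Bool) → ℝ :=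
  fun ε => (f (Fin.cons true ε) + f (Fin.cons false ε)) / 2

private noncomputable def dF {n : ℕ} (f : (Fin (n+1) → Bool) → ℝ) : (Fin n → Bool) → ℝ :=
  fun ε => (f (Fin.cons true ε) - f (Fin.cons false ε)) / 2

private lemma walsh_map_cons {n : ℕ} (B : Finset (Fin n)) (b : Bool) (ε : Fin n → Bool) :
    walsh (B.map (Fin.succEmb n)) (Fin.cons b ε) = walsh B ε := by
  rw [walsh, Finset.prod_map, walsh]
  apply Finset.prod_congr rfl
  intro i _
  simp [Fin.coe_succEmb, Fin.cons_succ]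

private lemma not_mem_map_succ {n : ℕ} (B : Finset (Fin n)) :
    (0 : Fin (n+1)) ∉ B.map (Fin.succEmb n) := by
  simp only [Finset.mem_map]
  rintro ⟨i, _, hi⟩
  exact Fin.succ_ne_zero i hi

private lemma walsh_insert_cons {n : ℕ} (B : Finset (Fin n)) (b : Bool) (ε : Fin n → Bool) :
    walsh (insert 0 (B.map (Fin.succEmb n))) (Fin.cons b ε)
      = (if b then (1:ℝ) else -1) * walsh B ε := by
  rw [walsh, Finset.prod_insert (not_mem_map_succ B), Fin.cons_zero]
  congr 1
  rw [← walsh_map_cons B b ε, walsh]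

private lemma coef_eF {n : ℕ} (f : (Fin (n+1) → Bool) → ℝ) (B : Finset (Fin n)) :
    fourierCoef (eF f) B = fourierCoef f (B.map (Fin.succEmb n)) := by
  have key : ∑ ε : Fin n → Bool, eF f ε * walsh B ε
      = ((∑ ε : Fin n → Bool, f (Fin.cons true ε) * walsh B ε)
        + (∑ ε : Fin n → Bool, f (Fin.cons false ε) * walsh B ε))/2 := by
    rw [← Finset.sum_add_distrib, Finset.sum_div]
    apply Finset.sum_congr rfl
    intro ε _
    simp only [eF]
    ring
  rw [fourierCoef, fourierCoef, key,
    sum_bool_cons (fun ε => f ε * walsh (B.map (Fin.succEmb n)) ε)]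
  simp only [walsh_map_cons]
  rw [pow_succ]
  ring

private lemma coef_dF {n : ℕ} (f : (Fin (n+1) → Bool) → ℝ) (B : Finset (Fin n)) :
    fourierCoef (dF f) B = fourierCoef f (insert 0 (B.map (Fin.succEmb n))) := by
  have key : ∑ ε : Fin n → Bool, dF f ε * walsh B ε
      = ((∑ ε : Fin n → Bool, f (Fin.cons true ε) * walsh B ε)
        - (∑ ε : Fin n → Bool, f (Fin.cons false ε) * walsh B ε))/2 := by
    rw [← Finset.sum_sub_distrib, Finset.sum_div]
    apply Finset.sum_congr rfl
    intro ε _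
    simp only [dF]
    ring
  rw [fourierCoef, fourierCoef, key,
    sum_bool_cons (fun ε => f ε * walsh (insert 0 (B.map (Fin.succEmb n))) ε)]
  simp only [walsh_insert_cons]
  simp only [show (if true = true then (1:ℝ) else -1) = 1 from rfl,
    show (if false = true then (1:ℝ) else -1) = -1 from rfl]
  simp only [ite_true, if_true, mul_one, neg_mul, mul_neg, Finset.sum_neg_distrib]
  rw [pow_succ]
  ring

private lemma coef_zero_imp_zero : ∀ n (f : (Fin n → Bool) → ℝ),
    (∀ A, fourierCoef f A = 0) → ∀ ε, f ε = 0 := by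
  intro n
  induction n with
  | zero =>
    intro f h ε
    have h0 := h ∅
    rw [fourierCoef, Fintype.sum_unique] at h0
    simp [walsh] at h0
    exact (congrArg f (Subsingleton.elim ε _)).trans h0
  | succ n IH =>
    intro f h ε
    have he : ∀ ε', eF f ε' = 0 := IH (eF f) (fun B => by rw [coef_eF]; exact h _)
    have hd : ∀ ε', dF f ε' = 0 := IH (dF f) (fun B => by rw [coef_dF]; exact h _)
    have hcons : ∀ b ε', f (Fin.cons b ε') = 0 := by
      intro b ε'
      have h1 := he ε'
      have h2 := hd ε'
      simp only [eF] at h1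
      simp only [dF] at h2
      cases b
      · linarith
      · linarith
    have := hcons (ε 0) (Fin.tail ε)
    rwa [Fin.cons_self_tail] at this

-- ## helpers

private lemma rpow_sq_eq {X : ℝ} (hX : 0 ≤ X) {p : ℝ} (hp : 0 < p) :
    (X^(1/p))^(2:ℕ) = X^(2/p) := by
  rw [← Real.rpow_natCast (X^(1/p)) 2, ← Real.rpow_mul hX]
  congr 1
  push_cast
  ring

private lemma le_of_sq_le_sq' {a b : ℝ} (hb : 0 ≤ b) (h : a^(2:ℕ) ≤ b^(2:ℕ)) : a ≤ b := by
  nlinarith [sq_nonneg (a+b), sq_nonneg (a-b)]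

private lemma sum_abs_rpow_two {n : ℕ} (g : (Fin n → Bool) → ℝ) :
    ∑ ε : Fin n → Bool, |g ε| ^ (2:ℝ) = ∑ ε : Fin n → Bool, (g ε)^(2:ℕ) := by
  apply Finset.sum_congr rfl
  intro ε _
  rw [show (2:ℝ) = ((2:ℕ):ℝ) by norm_num, Real.rpow_natCast, sq_abs]

private lemma pnorm_two_sq {n : ℕ} (g : (Fin n → Bool) → ℝ) :
    (pnorm 2 g)^(2:ℕ) = (∑ ε : Fin n → Bool, (g ε)^(2:ℕ)) / 2^n := by
  have hX : (0:ℝ) ≤ (∑ ε : Fin n → Bool, |g ε| ^ (2:ℝ)) / 2^n := by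
    apply div_nonneg _ (by positivity)
    exact Finset.sum_nonneg (fun ε _ => Real.rpow_nonneg (abs_nonneg _) _)
  rw [pnorm, rpow_sq_eq hX (by norm_num : (0:ℝ) < 2),
    show (2:ℝ)/2 = 1 by norm_num, Real.rpow_one, sum_abs_rpow_two]

private lemma pnorm_nonneg {n : ℕ} (p : ℝ) (g : (Fin n → Bool) → ℝ) : 0 ≤ pnorm p g := by
  apply Real.rpow_nonneg
  apply div_nonneg _ (by positivity)
  exact Finset.sum_nonneg (fun ε _ => Real.rpow_nonneg (abs_nonneg _) _)

-- Lyapunov: ‖·‖₂ ≤ ‖·‖_p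
private lemma pnorm_two_le_pnorm {n : ℕ} {p : ℝ} (hp : 2 ≤ p) (f : (Fin n → Bool) → ℝ) :
    pnorm 2 f ≤ pnorm p f := by
  have hp0 : (0:ℝ) < p := by linarith
  have hc : (0:ℝ) < 2^n := by positivity
  set X : ℝ := (∑ ε : Fin n → Bool, |f ε| ^ (2:ℝ)) / 2^n with hX
  have hX0 : 0 ≤ X := by
    apply div_nonneg _ hc.le
    exact Finset.sum_nonneg (fun ε _ => Real.rpow_nonneg (abs_nonneg _) _)
  have key : X ^ (p/2) ≤ (∑ ε : Fin n → Bool, |f ε| ^ p) / 2^n := by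
    have h1 : X = ∑ ε : Fin n → Bool, ((2:ℝ)^n)⁻¹ * |f ε| ^ (2:ℝ) := by
      rw [hX, ← Finset.mul_sum, div_eq_inv_mul]
    have h2 := Real.rpow_arith_mean_le_arith_mean_rpow Finset.univ
      (fun _ : Fin n → Bool => ((2:ℝ)^n)⁻¹) (fun ε => |f ε| ^ (2:ℝ))
      (fun i _ => by positivity)
      (by rw [Finset.sum_const, Finset.card_univ, nsmul_eq_mul, card_cube n]
          field_simp)
      (fun i _ => Real.rpow_nonneg (abs_nonneg _) _)
      (by linarith : (1:ℝ) ≤ p/2)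
    rw [← h1] at h2
    refine le_trans h2 (le_of_eq ?_)
    have hterm : ∀ ε : Fin n → Bool,
        ((2:ℝ)^n)⁻¹ * (|f ε| ^ (2:ℝ)) ^ (p/2) = ((2:ℝ)^n)⁻¹ * |f ε| ^ p := by
      intro ε
      congr 1
      rw [← Real.rpow_mul (abs_nonneg _), show (2:ℝ) * (p/2) = p by ring]
    calc ∑ i : Fin n → Bool, ((2:ℝ)^n)⁻¹ * (|f i| ^ (2:ℝ)) ^ (p/2)
        = ∑ i : Fin n → Bool, ((2:ℝ)^n)⁻¹ * |f i| ^ p :=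
          Finset.sum_congr rfl (fun ε _ => hterm ε)
    _ = (∑ ε : Fin n → Bool, |f ε| ^ p) / 2^n := by
          rw [← Finset.mul_sum, ← div_eq_inv_mul]
  have e1 : pnorm 2 f = (X ^ (p/2)) ^ (1/p) := by
    rw [pnorm, ← hX, ← Real.rpow_mul hX0]
    congr 1
    field_simp
  rw [e1, pnorm]
  exact Real.rpow_le_rpow (Real.rpow_nonneg hX0 _) key (by positivity)

-- Fourier coefficient of radProj
private lemma coef_radProj {n k : ℕ} (h : (Fin n → Bool) → ℝ) (A : Finset (Fin n)) :
    fourierCoef (radProj k h) A = if A.card = k then fourierCoef h A else 0 := by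
  classical
  have hc : ((2:ℝ)^n) ≠ 0 := by positivity
  have key : ∑ ε : Fin n → Bool, radProj k h ε * walsh A ε
      = ∑ B ∈ powersetCard k (univ : Finset (Fin n)),
          fourierCoef h B * (∑ ε : Fin n → Bool, walsh B ε * walsh A ε) := by
    simp only [radProj, Finset.sum_mul]
    rw [Finset.sum_comm]
    apply Finset.sum_congr rfl
    intro B _
    rw [Finset.mul_sum]
    apply Finset.sum_congr rfl
    intro ε _
    ring
  rw [fourierCoef, key]
  simp_rw [walsh_orth]
  simp_rw [mul_ite, mul_zero]
  rw [Finset.sum_ite_eq' (powersetCard k (univ : Finset (Fin n))) A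
    (fun B => fourierCoef h B * 2^n)]
  simp only [Finset.mem_powersetCard_univ]
  by_cases hA : A.card = k
  · rw [if_pos hA, if_pos hA, mul_div_assoc, div_self hc, mul_one]
  · rw [if_neg hA, if_neg hA, zero_div]

-- Bessel: ‖Rad_k h‖₂ ≤ ‖h‖₂
private lemma radProj_pnorm_two_le {n k : ℕ} (h : (Fin n → Bool) → ℝ) :
    pnorm 2 (radProj k h) ≤ pnorm 2 h := by
  classical
  set g := radProj k h with hg
  have hc : (0:ℝ) < 2^n := by positivity
  have inner_walsh : ∀ (u : (Fin n → Bool) → ℝ) (B : Finset (Fin n)),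
      ∑ ε : Fin n → Bool, u ε * walsh B ε = 2^n * fourierCoef u B := by
    intro u B
    rw [fourierCoef, mul_div_assoc']
    rw [mul_comm, mul_div_assoc, div_self hc.ne', mul_one]
  have inner_rad : ∀ u : (Fin n → Bool) → ℝ, ∑ ε : Fin n → Bool, u ε * g ε
      = ∑ B ∈ powersetCard k (univ : Finset (Fin n)),
          fourierCoef h B * (2^n * fourierCoef u B) := by
    intro u
    have step : ∑ ε : Fin n → Bool, u ε * g ε
        = ∑ B ∈ powersetCard k (univ : Finset (Fin n)),
            fourierCoef h B * (∑ ε : Fin n → Bool, u ε * walsh B ε) := by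
      simp only [hg, radProj, Finset.mul_sum]
      rw [Finset.sum_comm]
      apply Finset.sum_congr rfl
      intro B _
      apply Finset.sum_congr rfl
      intro ε _
      ring
    rw [step]
    apply Finset.sum_congr rfl
    intro B _
    rw [inner_walsh u B]
  have key1 : ∑ ε : Fin n → Bool, g ε * h ε
      = 2^n * ∑ B ∈ powersetCard k (univ : Finset (Fin n)), (fourierCoef h B)^(2:ℕ) := by
    have comm : ∑ ε : Fin n → Bool, g ε * h ε = ∑ ε : Fin n → Bool, h ε * g ε :=
      Finset.sum_congr rfl (fun ε _ => mul_comm _ _)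
    rw [comm, inner_rad h, Finset.mul_sum]
    apply Finset.sum_congr rfl
    intro B _
    ring
  have key2 : ∑ ε : Fin n → Bool, g ε * g ε
      = 2^n * ∑ B ∈ powersetCard k (univ : Finset (Fin n)), (fourierCoef h B)^(2:ℕ) := by
    rw [inner_rad g, Finset.mul_sum]
    apply Finset.sum_congr rfl
    intro B hB
    rw [coef_radProj h B, if_pos (Finset.mem_powersetCard_univ.mp hB)]
    ring
  have hS2 : ∑ ε : Fin n → Bool, (g ε)^(2:ℕ) ≤ ∑ ε : Fin n → Bool, (h ε)^(2:ℕ) := by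
    have hgg : ∑ ε : Fin n → Bool, (g ε)^(2:ℕ) = ∑ ε : Fin n → Bool, g ε * h ε := by
      rw [key1, ← key2]
      apply Finset.sum_congr rfl
      intro ε _
      ring
    have cs := Finset.sum_mul_sq_le_sq_mul_sq Finset.univ g h
    by_cases hz : ∑ ε : Fin n → Bool, (g ε)^(2:ℕ) = 0
    · rw [hz]
      exact Finset.sum_nonneg (fun ε _ => sq_nonneg _)
    · have hpos : 0 < ∑ ε : Fin n → Bool, (g ε)^(2:ℕ) :=
        lt_of_le_of_ne (Finset.sum_nonneg (fun ε _ => sq_nonneg _)) (Ne.symm hz)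
      rw [← hgg] at cs
      nlinarith
  apply le_of_sq_le_sq' (pnorm_nonneg 2 h)
  rw [pnorm_two_sq g, pnorm_two_sq h]
  gcongr

private lemma pnorm_dim_zero (q : ℝ) (hq : 0 < q) (f : (Fin 0 → Bool) → ℝ) :
    pnorm q f = |f default| := by
  rw [pnorm, Fintype.sum_unique]
  norm_num
  rw [← Real.rpow_mul (abs_nonneg _), mul_inv_cancel₀ hq.ne', Real.rpow_one]
  exact congrArg (fun x => |x|) (congrArg f (Subsingleton.elim _ _))

private lemma sq_rpow_half {p x : ℝ} (hp : 0 ≤ p) :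
    (p ^ (x/2))^(2:ℕ) = p ^ x := by
  rw [← Real.rpow_natCast (p ^ (x/2)) 2, ← Real.rpow_mul hp]
  congr 1
  push_cast
  ring

private lemma thmB (p : ℝ) (hp : 2 ≤ p) : ∀ n k (f : (Fin n → Bool) → ℝ),
    (∀ A : Finset (Fin n), k < A.card → fourierCoef f A = 0) →
    pnorm p f ≤ p ^ ((k:ℝ)/2) * pnorm 2 f := by
  have hp0 : (0:ℝ) < p := by linarith
  have hone : ∀ k : ℕ, (1:ℝ) ≤ p ^ ((k:ℝ)/2) := by
    intro k
    rw [show (1:ℝ) = 1 ^ ((k:ℝ)/2) from (Real.one_rpow _).symm]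
    exact Real.rpow_le_rpow zero_le_one (by linarith) (by positivity)
  intro n
  induction n with
  | zero =>
    intro k f _
    rw [pnorm_dim_zero p hp0 f, pnorm_dim_zero 2 (by norm_num) f]
    nlinarith [hone k, abs_nonneg (f default)]
  | succ n IH =>
    intro k f hdeg
    have hfe : ∀ ε', f (Fin.cons true ε') = eF f ε' + dF f ε' := by
      intro ε'; simp only [eF, dF]; ring
    have hff : ∀ ε', f (Fin.cons false ε') = eF f ε' - dF f ε' := by
      intro ε'; simp only [eF, dF]; ring
    by_cases hk : k = 0
    · subst hk
      have hd0 : ∀ ε', dF f ε' = 0 := coef_zero_imp_zero n (dF f) (fun B => by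
        rw [coef_dF]
        apply hdeg
        rw [Finset.card_insert_of_notMem (not_mem_map_succ B)]
        omega)
      have hpe : ∀ q : ℝ, 0 < q → pnorm q f = pnorm q (eF f) := by
        intro q hq
        rw [pnorm, pnorm, sum_bool_cons (fun ε => |f ε| ^ q)]
        have h1 : ∑ ε' : Fin n → Bool, |f (Fin.cons true ε')| ^ q
            = ∑ ε' : Fin n → Bool, |eF f ε'| ^ q := by
          apply Finset.sum_congr rfl; intro ε' _
          rw [hfe ε', hd0 ε', add_zero]
        have h2 : ∑ ε' : Fin n → Bool, |f (Fin.cons false ε')| ^ q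
            = ∑ ε' : Fin n → Bool, |eF f ε'| ^ q := by
          apply Finset.sum_congr rfl; intro ε' _
          rw [hff ε', hd0 ε', sub_zero]
        rw [h1, h2]
        congr 1
        rw [pow_succ]
        ring
      have hdege : ∀ B : Finset (Fin n), 0 < B.card → fourierCoef (eF f) B = 0 := fun B hB => by
        rw [coef_eF]; apply hdeg; rwa [Finset.card_map]
      calc pnorm p f = pnorm p (eF f) := hpe p hp0
      _ ≤ p ^ (((0:ℕ):ℝ)/2) * pnorm 2 (eF f) := IH 0 (eF f) hdege
      _ = p ^ (((0:ℕ):ℝ)/2) * pnorm 2 f := by rw [← hpe 2 (by norm_num)]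
    · obtain ⟨k', rfl⟩ : ∃ k', k = k' + 1 :=
        ⟨k - 1, (Nat.succ_pred_eq_of_pos (Nat.pos_of_ne_zero hk)).symm⟩
      have hdege : ∀ B : Finset (Fin n), k'+1 < B.card → fourierCoef (eF f) B = 0 := fun B hB => by
        rw [coef_eF]; apply hdeg; rwa [Finset.card_map]
      have hdegd : ∀ B : Finset (Fin n), k' < B.card → fourierCoef (dF f) B = 0 := fun B hB => by
        rw [coef_dF]; apply hdeg
        rw [Finset.card_insert_of_notMem (not_mem_map_succ B), Finset.card_map]
        omega
      have IHe := IH (k'+1) (eF f) hdege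
      have IHd := IH k' (dF f) hdegd
      set e := eF f with he
      set d := dF f with hd
      have hc : (0:ℝ) < 2^n := by positivity
      set S : ℝ := ∑ ε : Fin n → Bool, (e ε^(2:ℕ) + p * d ε^(2:ℕ))^(p/2) with hS
      have hS0 : 0 ≤ S :=
        Finset.sum_nonneg (fun ε _ => Real.rpow_nonneg (by positivity) _)
      have step1 : ∑ ε : Fin (n+1) → Bool, |f ε| ^ p ≤ 2 * S := by
        rw [sum_bool_cons (fun ε => |f ε| ^ p), hS, Finset.mul_sum, ← Finset.sum_add_distrib]
        apply Finset.sum_le_sum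
        intro ε _
        rw [hfe ε, hff ε]
        have := twoPoint p (e ε) (d ε) hp
        linarith
      have hSd0 : (0:ℝ) ≤ S / 2^n := div_nonneg hS0 hc.le
      have step2 : pnorm p f ≤ (S / 2^n) ^ (1/p) := by
        rw [pnorm]
        apply Real.rpow_le_rpow (div_nonneg (Finset.sum_nonneg
          (fun ε _ => Real.rpow_nonneg (abs_nonneg _) _)) (by positivity)) ?_ (by positivity)
        rw [pow_succ, div_le_div_iff₀ (by positivity) hc]
        calc (∑ ε : Fin (n+1) → Bool, |f ε| ^ p) * 2^n ≤ (2*S) * 2^n :=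
              mul_le_mul_of_nonneg_right step1 hc.le
        _ = S * (2^n * 2) := by ring
      set T1 : ℝ := ∑ ε : Fin n → Bool, (e ε^(2:ℕ))^(p/2) with hT1def
      set T2 : ℝ := ∑ ε : Fin n → Bool, (p * d ε^(2:ℕ))^(p/2) with hT2def
      have hT10 : 0 ≤ T1 := Finset.sum_nonneg (fun ε _ => Real.rpow_nonneg (by positivity) _)
      have hT20 : 0 ≤ T2 := Finset.sum_nonneg (fun ε _ => Real.rpow_nonneg (by positivity) _)
      have mink : S ^ (2/p) ≤ T1 ^ (2/p) + T2 ^ (2/p) := by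
        have hmk := Real.Lp_add_le_of_nonneg (s := Finset.univ)
          (f := fun ε : Fin n → Bool => e ε^(2:ℕ)) (g := fun ε : Fin n → Bool => p * d ε^(2:ℕ))
          (p := p/2) (by linarith) (fun ε _ => by positivity) (fun ε _ => by positivity)
        rw [show (1:ℝ)/(p/2) = 2/p by rw [one_div_div]] at hmk
        exact hmk
      -- identify T1, T2
      have habs : ∀ (x : ℝ), (x^(2:ℕ))^(p/2) = |x| ^ p := by
        intro x
        rw [← sq_abs, ← Real.rpow_natCast |x| 2, ← Real.rpow_mul (abs_nonneg _)]
        congr 1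
        push_cast
        ring
      have hT1 : T1 = ∑ ε : Fin n → Bool, |e ε| ^ p := by
        rw [hT1def]
        exact Finset.sum_congr rfl (fun ε _ => habs (e ε))
      have hT2 : T2 = p^(p/2) * ∑ ε : Fin n → Bool, |d ε| ^ p := by
        rw [hT2def, Finset.mul_sum]
        apply Finset.sum_congr rfl
        intro ε _
        rw [Real.mul_rpow hp0.le (by positivity), habs (d ε)]
      -- squares of pnorms
      have hsqe : ((∑ ε : Fin n → Bool, |e ε| ^ p)/2^n) ^ (2/p) = (pnorm p e)^(2:ℕ) := by
        rw [pnorm, rpow_sq_eq (div_nonneg (Finset.sum_nonneg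
          (fun ε _ => Real.rpow_nonneg (abs_nonneg _) _)) hc.le) hp0]
      have hsqd : ((∑ ε : Fin n → Bool, |d ε| ^ p)/2^n) ^ (2/p) = (pnorm p d)^(2:ℕ) := by
        rw [pnorm, rpow_sq_eq (div_nonneg (Finset.sum_nonneg
          (fun ε _ => Real.rpow_nonneg (abs_nonneg _) _)) hc.le) hp0]
      -- parseval split
      have parseval : (pnorm 2 f)^(2:ℕ) = (pnorm 2 e)^(2:ℕ) + (pnorm 2 d)^(2:ℕ) := by
        rw [pnorm_two_sq f, pnorm_two_sq e, pnorm_two_sq d]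
        rw [sum_bool_cons (fun ε => f ε^(2:ℕ))]
        have key : (∑ ε' : Fin n → Bool, f (Fin.cons true ε')^(2:ℕ))
            + (∑ ε' : Fin n → Bool, f (Fin.cons false ε')^(2:ℕ))
            = 2 * ((∑ ε : Fin n → Bool, e ε^(2:ℕ)) + ∑ ε : Fin n → Bool, d ε^(2:ℕ)) := by
          rw [← Finset.sum_add_distrib, ← Finset.sum_add_distrib, Finset.mul_sum]
          apply Finset.sum_congr rfl
          intro ε _
          rw [hfe ε, hff ε]
          ring
        rw [key, pow_succ]
        field_simp
      -- big square chain
      set C : ℝ := p ^ (((k'+1:ℕ):ℝ)/2) with hC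
      have hC0 : 0 ≤ C := Real.rpow_nonneg hp0.le _
      have bigsq : ((S / 2^n) ^ (1/p))^(2:ℕ) ≤ (C * pnorm 2 f)^(2:ℕ) := by
        rw [rpow_sq_eq hSd0 hp0]
        have c1 : (S / 2^n) ^ (2/p) = S ^ (2/p) / (2^n : ℝ) ^ (2/p) :=
          Real.div_rpow hS0 hc.le _
        have c2 : S ^ (2/p) / (2^n : ℝ) ^ (2/p)
            ≤ (T1 ^ (2/p) + T2 ^ (2/p)) / (2^n : ℝ) ^ (2/p) := by
          gcongr
        have c3 : (T1 ^ (2/p) + T2 ^ (2/p)) / (2^n : ℝ) ^ (2/p)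
            = (T1/2^n) ^ (2/p) + (T2/2^n) ^ (2/p) := by
          rw [add_div, Real.div_rpow hT10 hc.le, Real.div_rpow hT20 hc.le]
        have c4 : (T1/2^n) ^ (2/p) = (pnorm p e)^(2:ℕ) := by
          rw [hT1, hsqe]
        have c5 : (T2/2^n) ^ (2/p) = p * (pnorm p d)^(2:ℕ) := by
          rw [hT2, mul_div_assoc,
            Real.mul_rpow (Real.rpow_nonneg hp0.le _) (div_nonneg (Finset.sum_nonneg
              (fun ε _ => Real.rpow_nonneg (abs_nonneg _) _)) hc.le),
            ← Real.rpow_mul hp0.le, show (p/2)*(2/p) = 1 by field_simp, Real.rpow_one, hsqd]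
        have c6 : (pnorm p e)^(2:ℕ) ≤ (C * pnorm 2 e)^(2:ℕ) :=
          pow_le_pow_left₀ (pnorm_nonneg p e) IHe 2
        have c7 : (pnorm p d)^(2:ℕ) ≤ (p ^ ((k':ℝ)/2) * pnorm 2 d)^(2:ℕ) :=
          pow_le_pow_left₀ (pnorm_nonneg p d) IHd 2
        have c8 : (C * pnorm 2 e)^(2:ℕ) = p ^ ((k':ℝ)+1) * (pnorm 2 e)^(2:ℕ) := by
          rw [mul_pow, hC, sq_rpow_half hp0.le]
          congr 2
          push_cast
          ring
        have c9 : p * (p ^ ((k':ℝ)/2) * pnorm 2 d)^(2:ℕ) = p ^ ((k':ℝ)+1) * (pnorm 2 d)^(2:ℕ) := by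
          rw [mul_pow, sq_rpow_half hp0.le, Real.rpow_add_one hp0.ne' (k':ℝ)]
          ring
        have c10 : (C * pnorm 2 f)^(2:ℕ) = p ^ ((k':ℝ)+1) * (pnorm 2 f)^(2:ℕ) := by
          rw [mul_pow, hC, sq_rpow_half hp0.le]
          congr 2
          push_cast
          ring
        calc (S / 2^n) ^ (2/p) ≤ (T1/2^n) ^ (2/p) + (T2/2^n) ^ (2/p) := by
              rw [c1, ← c3]; exact c2
        _ = (pnorm p e)^(2:ℕ) + p * (pnorm p d)^(2:ℕ) := by rw [c4, c5]
        _ ≤ (C * pnorm 2 e)^(2:ℕ) + p * (p ^ ((k':ℝ)/2) * pnorm 2 d)^(2:ℕ) := by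
              have := mul_le_mul_of_nonneg_left c7 hp0.le
              linarith
        _ = p ^ ((k':ℝ)+1) * ((pnorm 2 e)^(2:ℕ) + (pnorm 2 d)^(2:ℕ)) := by
              rw [c8, c9]; ring
        _ = (C * pnorm 2 f)^(2:ℕ) := by rw [← parseval, c10]
      refine le_trans step2 (le_of_sq_le_sq' (mul_nonneg hC0 (pnorm_nonneg 2 f)) bigsq)


/-- **Bonami's bound (3.1)**: for every `p ∈ [2,∞)`, `n ∈ ℕ`, `k ∈ {0,…,n}` and every
`h : {-1,1}^n → ℝ`, `‖Rad_k h‖_p ≤ p^{k/2} ‖h‖_p`. -/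
theorem radProj_pnorm_le (p : ℝ) (hp : 2 ≤ p) (n : ℕ) (k : ℕ) (hk : k ≤ n)
    (h : (Fin n → Bool) → ℝ) :
    pnorm p (radProj k h) ≤ p ^ ((k : ℝ) / 2) * pnorm p h := by
  have hdeg : ∀ A : Finset (Fin n), k < A.card → fourierCoef (radProj k h) A = 0 := by
    intro A hA
    rw [coef_radProj, if_neg (by omega)]
  calc pnorm p (radProj k h) ≤ p ^ ((k:ℝ)/2) * pnorm 2 (radProj k h) := thmB p hp n k _ hdeg
  _ ≤ p ^ ((k:ℝ)/2) * pnorm 2 h :=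
      mul_le_mul_of_nonneg_left (radProj_pnorm_two_le h) (Real.rpow_nonneg (by linarith) _)
  _ ≤ p ^ ((k:ℝ)/2) * pnorm p h :=
      mul_le_mul_of_nonneg_left (pnorm_two_le_pnorm hp h) (Real.rpow_nonneg (by linarith) _)
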